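/- Let S⁽ⁿ⁾ be the Sylvester matrix of order 2ⁿ and α_i⁽ⁿ⁾(m) = ∑_{k=1}^m S⁽ⁿ⁾_{k i}. Write i − 1 in binary. Then max_{1 ≤ m ≤ 2ⁿ} |α_i⁽ⁿ⁾(m)| = 2^{f(i)}, where f(1) = n; f(i) = 0 if i is even; and if i > 1 is odd, f(i) is the least positive integer j such that the coefficient of 2^j in the binary expansion of i is 1 (i.e., i = …+ 2^{f(i)} + 1 with zero digits in positions 1,…,f(i)−1). -/

import Mathlib

/-- The Sylvester matrix of order `2 ^ n`, with rows and columns indexed by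
`1, …, 2 ^ n`.  It is defined by the recursion
`S⁽ⁿ⁺¹⁾ = [[S⁽ⁿ⁾, S⁽ⁿ⁾], [S⁽ⁿ⁾, -S⁽ⁿ⁾]]` starting from the `1 × 1` matrix `[1]`
(so that `S⁽¹⁾ = [[1, 1], [1, -1]]`). -/
def Syl : ℕ → ℕ → ℕ → ℝ
  | 0, _, _ => 1
  | n + 1, k, i =>
    if k ≤ 2 ^ n then
      if i ≤ 2 ^ n then Syl n k i else Syl n k (i - 2 ^ n)
    else
      if i ≤ 2 ^ n then Syl n (k - 2 ^ n) i else -Syl n (k - 2 ^ n) (i - 2 ^ n)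

/-- `maxAbs n i = max_{1 ≤ m ≤ 2^n} |α_i⁽ⁿ⁾(m)|`, where
`α_i⁽ⁿ⁾(m) = ∑_{k=1}^m S⁽ⁿ⁾_{k i}` is a partial column sum of the Sylvester
matrix of order `2 ^ n`. -/
noncomputable def maxAbs (n i : ℕ) : ℝ :=
  (Finset.Icc 1 (2 ^ n)).sup' ⟨1, by simp [Nat.one_le_two_pow]⟩
    fun m => |∑ k ∈ Finset.Icc 1 m, Syl n k i|

open Finset

lemma syl_lo (n k i : ℕ) (hk : k ≤ 2 ^ n) :
    Syl (n + 1) k i = if i ≤ 2 ^ n then Syl n k i else Syl n k (i - 2 ^ n) := by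
  rw [Syl, if_pos hk]

lemma syl_hi (n k i : ℕ) (hk : 1 ≤ k) :
    Syl (n + 1) (2 ^ n + k) i
      = if i ≤ 2 ^ n then Syl n k i else -Syl n k (i - 2 ^ n) := by
  rw [Syl, if_neg (by omega)]
  simp [Nat.add_sub_cancel_left]

lemma syl_one (n k : ℕ) : Syl n k 1 = 1 := by
  induction n generalizing k with
  | zero => rfl
  | succ n ih =>
    have h1 : (1 : ℕ) ≤ 2 ^ n := Nat.one_le_two_pow
    rw [Syl]
    split_ifs <;> simp_all

lemma sum_one_col (n m : ℕ) : ∑ k ∈ Icc 1 m, Syl n k 1 = (m : ℝ) := by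
  simp [syl_one, Nat.card_Icc]

lemma sum_split (n i m' : ℕ) :
    ∑ k ∈ Icc 1 (2 ^ n + m'), Syl (n + 1) k i
      = (∑ k ∈ Icc 1 (2 ^ n), Syl (n + 1) k i)
        + ∑ k ∈ Icc 1 m', Syl (n + 1) (2 ^ n + k) i := by
  rw [(show ∀ b : ℕ, Icc 1 b = Ioc 0 b from fun b => Finset.Icc_add_one_left_eq_Ioc 0 b), (show ∀ b : ℕ, Icc 1 b = Ioc 0 b from fun b => Finset.Icc_add_one_left_eq_Ioc 0 b), (show ∀ b : ℕ, Icc 1 b = Ioc 0 b from fun b => Finset.Icc_add_one_left_eq_Ioc 0 b),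
    ← Finset.sum_Ioc_consecutive _ (Nat.zero_le (2 ^ n)) (Nat.le_add_right _ m')]
  congr 1
  have : Finset.Ioc (2 ^ n) (2 ^ n + m')
      = (Finset.Ioc 0 m').map (addLeftEmbedding (2 ^ n)) := by
    rw [Finset.map_add_left_Ioc]; simp
  rw [this, Finset.sum_map]
  rfl

lemma sum_col (n i : ℕ) (h2 : 2 ≤ i) (hle : i ≤ 2 ^ n) :
    ∑ k ∈ Icc 1 (2 ^ n), Syl n k i = 0 := by
  induction n generalizing i with
  | zero => simp at hle; omega
  | succ n ih =>
    have hp : 2 ^ (n + 1) = 2 ^ n + 2 ^ n := by rw [pow_succ]; ring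
    rw [hp, sum_split]
    by_cases hi : i ≤ 2 ^ n
    · have e1 : ∑ k ∈ Icc 1 (2 ^ n), Syl (n + 1) k i
          = ∑ k ∈ Icc 1 (2 ^ n), Syl n k i :=
        Finset.sum_congr rfl fun k hk => by
          rw [syl_lo n k i (mem_Icc.mp hk).2, if_pos hi]
      have e2 : ∑ k ∈ Icc 1 (2 ^ n), Syl (n + 1) (2 ^ n + k) i
          = ∑ k ∈ Icc 1 (2 ^ n), Syl n k i :=
        Finset.sum_congr rfl fun k hk => by
          rw [syl_hi n k i (mem_Icc.mp hk).1, if_pos hi]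
      rw [e1, e2, ih i h2 hi]; ring
    · have hi'le : i - 2 ^ n ≤ 2 ^ n := by omega
      have e1 : ∑ k ∈ Icc 1 (2 ^ n), Syl (n + 1) k i
          = ∑ k ∈ Icc 1 (2 ^ n), Syl n k (i - 2 ^ n) :=
        Finset.sum_congr rfl fun k hk => by
          rw [syl_lo n k i (mem_Icc.mp hk).2, if_neg hi]
      have e2 : ∑ k ∈ Icc 1 (2 ^ n), Syl (n + 1) (2 ^ n + k) i
          = ∑ k ∈ Icc 1 (2 ^ n), -Syl n k (i - 2 ^ n) :=
        Finset.sum_congr rfl fun k hk => by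
          rw [syl_hi n k i (mem_Icc.mp hk).1, if_neg hi]
      rw [e1, e2, Finset.sum_neg_distrib]
      rcases eq_or_ne (i - 2 ^ n) 1 with h1 | h1
      · rw [h1, sum_one_col]; ring
      · rw [ih (i - 2 ^ n) (by omega) hi'le]; ring

lemma maxAbs_one (n : ℕ) : maxAbs n 1 = (2 : ℝ) ^ n := by
  unfold maxAbs
  apply le_antisymm
  · apply Finset.sup'_le
    intro m hm
    rw [sum_one_col, abs_of_nonneg (Nat.cast_nonneg m)]
    exact_mod_cast (mem_Icc.mp hm).2
  · have hmem : 2 ^ n ∈ Icc 1 (2 ^ n) := mem_Icc.mpr ⟨Nat.one_le_two_pow, le_rfl⟩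
    have h := Finset.le_sup' (fun m => |∑ k ∈ Icc 1 m, Syl n k 1|) hmem
    rw [sum_one_col] at h
    calc (2 : ℝ) ^ n = |((2 ^ n : ℕ) : ℝ)| := by
          rw [abs_of_nonneg (Nat.cast_nonneg _)]; push_cast; ring
      _ ≤ _ := h

lemma maxAbs_reduce (n i i' : ℕ) (h2 : 2 ≤ i') (hle : i' ≤ 2 ^ n)
    (hi : i = i' ∨ i = 2 ^ n + i') :
    maxAbs (n + 1) i = maxAbs n i' := by
  have hp : 2 ^ (n + 1) = 2 ^ n + 2 ^ n := by rw [pow_succ]; ring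
  have hpos : (1 : ℕ) ≤ 2 ^ n := Nat.one_le_two_pow
  have hlow : ∀ m ≤ 2 ^ n,
      ∑ k ∈ Icc 1 m, Syl (n + 1) k i = ∑ k ∈ Icc 1 m, Syl n k i' := by
    intro m hm
    refine Finset.sum_congr rfl fun k hk => ?_
    have hk2 : k ≤ 2 ^ n := le_trans (mem_Icc.mp hk).2 hm
    rcases hi with rfl | rfl
    · rw [syl_lo _ _ _ hk2, if_pos hle]
    · rw [syl_lo _ _ _ hk2, if_neg (by omega), Nat.add_sub_cancel_left]
  have hhigh : ∀ m', 1 ≤ m' → m' ≤ 2 ^ n →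
      |∑ k ∈ Icc 1 (2 ^ n + m'), Syl (n + 1) k i|
        = |∑ k ∈ Icc 1 m', Syl n k i'| := by
    intro m' h1 hm'
    rw [sum_split, hlow (2 ^ n) le_rfl, sum_col n i' h2 hle, zero_add]
    rcases hi with rfl | rfl
    · have e : ∑ k ∈ Icc 1 m', Syl (n + 1) (2 ^ n + k) i
          = ∑ k ∈ Icc 1 m', Syl n k i :=
        Finset.sum_congr rfl fun k hk => by
          rw [syl_hi _ _ _ (mem_Icc.mp hk).1, if_pos hle]
      rw [e]
    · have e : ∑ k ∈ Icc 1 m', Syl (n + 1) (2 ^ n + k) (2 ^ n + i')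
          = ∑ k ∈ Icc 1 m', -Syl n k i' :=
        Finset.sum_congr rfl fun k hk => by
          rw [syl_hi _ _ _ (mem_Icc.mp hk).1, if_neg (by omega),
            Nat.add_sub_cancel_left]
      rw [e, Finset.sum_neg_distrib, abs_neg]
  unfold maxAbs
  apply le_antisymm
  · apply Finset.sup'_le
    intro m hm
    obtain ⟨hm1, hm2⟩ := mem_Icc.mp hm
    have hm2' : m ≤ 2 ^ n + 2 ^ n := by rw [← hp]; exact hm2
    by_cases h : m ≤ 2 ^ n
    · rw [hlow m h]
      exact Finset.le_sup' (fun m => |∑ k ∈ Icc 1 m, Syl n k i'|)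
        (mem_Icc.mpr ⟨hm1, h⟩)
    · have hme : m = 2 ^ n + (m - 2 ^ n) := by omega
      rw [hme, hhigh (m - 2 ^ n) (by omega) (by omega)]
      exact Finset.le_sup' (fun m => |∑ k ∈ Icc 1 m, Syl n k i'|)
        (mem_Icc.mpr ⟨by omega, by omega⟩)
  · apply Finset.sup'_le
    intro m hm
    obtain ⟨hm1, hm2⟩ := mem_Icc.mp hm
    rw [← hlow m hm2]
    exact Finset.le_sup' (fun m => |∑ k ∈ Icc 1 m, Syl (n + 1) k i|)
      (mem_Icc.mpr ⟨hm1, by rw [hp]; omega⟩)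

lemma maxAbs_mid (n : ℕ) : maxAbs (n + 1) (2 ^ n + 1) = (2 : ℝ) ^ n := by
  have hp : 2 ^ (n + 1) = 2 ^ n + 2 ^ n := by rw [pow_succ]; ring
  have hpos : (1 : ℕ) ≤ 2 ^ n := Nat.one_le_two_pow
  have hne : ¬(2 ^ n + 1 ≤ 2 ^ n) := by omega
  have hlow : ∀ m ≤ 2 ^ n,
      ∑ k ∈ Icc 1 m, Syl (n + 1) k (2 ^ n + 1) = (m : ℝ) := by
    intro m hm
    have e : ∑ k ∈ Icc 1 m, Syl (n + 1) k (2 ^ n + 1)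
        = ∑ k ∈ Icc 1 m, Syl n k 1 :=
      Finset.sum_congr rfl fun k hk => by
        rw [syl_lo _ _ _ (le_trans (mem_Icc.mp hk).2 hm), if_neg hne,
          Nat.add_sub_cancel_left]
    rw [e, sum_one_col]
  have hhigh : ∀ m' : ℕ, 1 ≤ m' → m' ≤ 2 ^ n →
      ∑ k ∈ Icc 1 (2 ^ n + m'), Syl (n + 1) k (2 ^ n + 1)
        = ((2 ^ n : ℕ) : ℝ) - (m' : ℝ) := by
    intro m' h1 hm'
    rw [sum_split, hlow (2 ^ n) le_rfl]
    have e : ∑ k ∈ Icc 1 m', Syl (n + 1) (2 ^ n + k) (2 ^ n + 1)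
        = ∑ k ∈ Icc 1 m', -Syl n k 1 :=
      Finset.sum_congr rfl fun k hk => by
        rw [syl_hi _ _ _ (mem_Icc.mp hk).1, if_neg hne, Nat.add_sub_cancel_left]
    rw [e, Finset.sum_neg_distrib, sum_one_col]
    ring
  unfold maxAbs
  apply le_antisymm
  · apply Finset.sup'_le
    intro m hm
    obtain ⟨hm1, hm2⟩ := mem_Icc.mp hm
    have hm2' : m ≤ 2 ^ n + 2 ^ n := by rw [← hp]; exact hm2
    by_cases h : m ≤ 2 ^ n
    · rw [hlow m h, abs_of_nonneg (Nat.cast_nonneg m)]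
      exact_mod_cast h
    · have hme : m = 2 ^ n + (m - 2 ^ n) := by omega
      rw [hme, hhigh (m - 2 ^ n) (by omega) (by omega)]
      have c1 : ((m - 2 ^ n : ℕ) : ℝ) ≤ ((2 ^ n : ℕ) : ℝ) := by
        exact_mod_cast (by omega : m - 2 ^ n ≤ 2 ^ n)
      have c0 : (0 : ℝ) ≤ ((m - 2 ^ n : ℕ) : ℝ) := Nat.cast_nonneg _
      have c2 : ((2 ^ n : ℕ) : ℝ) = (2 : ℝ) ^ n := by push_cast; ring
      rw [abs_of_nonneg (by linarith)]
      linarith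
  · have hmem : 2 ^ n ∈ Icc 1 (2 ^ (n + 1)) :=
      mem_Icc.mpr ⟨Nat.one_le_two_pow, by rw [hp]; omega⟩
    have h := Finset.le_sup'
      (fun m => |∑ k ∈ Icc 1 m, Syl (n + 1) k (2 ^ n + 1)|) hmem
    rw [hlow (2 ^ n) le_rfl] at h
    calc (2 : ℝ) ^ n = |((2 ^ n : ℕ) : ℝ)| := by
          rw [abs_of_nonneg (Nat.cast_nonneg _)]; push_cast; ring
      _ ≤ _ := h


lemma mod_two_pow_eq_one (i n : ℕ) (hn : 0 < n) (hodd : i % 2 = 1)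
    (hbits : ∀ j, 0 < j → j < n → i.testBit j = false) : i % 2 ^ n = 1 := by
  apply Nat.eq_of_testBit_eq
  intro j
  rw [Nat.testBit_mod_two_pow]
  match j with
  | 0 => simp [hn, hodd]
  | j + 1 =>
    have h1 : Nat.testBit 1 (j + 1) = false :=
      Nat.testBit_lt_two_pow (Nat.one_lt_two_pow_iff.mpr (by omega))
    rw [h1]
    by_cases hjn : j + 1 < n
    · simp [hbits (j + 1) (Nat.succ_pos j) hjn]
    · simp [hjn]

/-- `max_{1 ≤ m ≤ 2^n} |α_i⁽ⁿ⁾(m)| = 2 ^ f(i)`, where `f(1) = n`, `f(i) = 0`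
for even `i`, and for odd `i > 1`, `f(i)` is the least positive integer `j`
such that the binary digit of `i` in position `j` is `1`. -/
theorem sylvester_maxAbs_eq_pow (n : ℕ) (i : ℕ) (hi₁ : 1 ≤ i) (hi₂ : i ≤ 2 ^ n)
    (f : ℕ)
    (hf : (i = 1 ∧ f = n) ∨
          (i ≠ 1 ∧ i % 2 = 0 ∧ f = 0) ∨
          (i ≠ 1 ∧ i % 2 = 1 ∧ 0 < f ∧ Nat.testBit i f = true ∧
            ∀ j, 0 < j → j < f → Nat.testBit i j = false)) :
    maxAbs n i = (2 : ℝ) ^ f := by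
  induction n generalizing i f with
  | zero =>
    have hi : i = 1 := by omega
    subst hi
    have hf0 : f = 0 := by
      rcases hf with ⟨_, rfl⟩ | ⟨h, _⟩ | ⟨h, _⟩ <;> first | rfl | exact absurd rfl h
    subst hf0
    exact maxAbs_one 0
  | succ n ih =>
    have hp : 2 ^ (n + 1) = 2 ^ n + 2 ^ n := by rw [pow_succ]; ring
    have hpos : (1 : ℕ) ≤ 2 ^ n := Nat.one_le_two_pow
    rcases eq_or_ne i 1 with rfl | hne
    · have hfe : f = n + 1 := by
        rcases hf with ⟨_, h⟩ | ⟨h, _⟩ | ⟨h, _⟩ <;> first | exact h | exact absurd rfl h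
      subst hfe
      exact maxAbs_one (n + 1)
    · have hf' := hf.resolve_left (fun h => hne h.1)
      by_cases hi : i ≤ 2 ^ n
      · rw [maxAbs_reduce n i i (by omega) hi (Or.inl rfl)]
        exact ih i (by omega) hi f (Or.inr hf')
      · have hi'1 : 1 ≤ i - 2 ^ n := by omega
        have hi'le : i - 2 ^ n ≤ 2 ^ n := by omega
        rcases eq_or_ne (i - 2 ^ n) 1 with h1 | h1
        · have hieq : i = 2 ^ n + 1 := by omega
          subst hieq
          have hfe : f = n := by
            rcases hf' with ⟨_, heven, rfl⟩ | ⟨_, hodd, hfpos, hbit, hmin⟩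
            · by_contra hn
              obtain ⟨c, hc⟩ : 2 ∣ 2 ^ n := dvd_pow_self 2 (by omega)
              omega
            · rcases lt_trichotomy f n with hlt | heq | hgt
              · rw [Nat.testBit_two_pow_add_gt hlt 1] at hbit
                have hb1 : Nat.testBit 1 f = false :=
                  Nat.testBit_lt_two_pow (Nat.one_lt_two_pow_iff.mpr (by omega))
                simp_all
              · exact heq
              · exfalso
                have hn1 : 1 ≤ n := by
                  by_contra h
                  have hn0 : n = 0 := by omega
                  subst hn0
                  omega
                have h22 : (2 : ℕ) ≤ 2 ^ n := by
                  calc (2 : ℕ) = 2 ^ 1 := rfl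
                    _ ≤ 2 ^ n := Nat.pow_le_pow_right (by norm_num) hn1
                have h2f : 2 ^ (n + 1) ≤ 2 ^ f := Nat.pow_le_pow_right (by norm_num) hgt
                have hlt2 : 2 ^ n + 1 < 2 ^ f := by omega
                rw [Nat.testBit_lt_two_pow hlt2] at hbit
                exact Bool.false_ne_true hbit
          subst hfe
          exact maxAbs_mid _
        · have hieq : i = 2 ^ n + (i - 2 ^ n) := by omega
          rw [hieq, maxAbs_reduce n _ (i - 2 ^ n) (by omega) hi'le (Or.inr rfl)]
          have hn1 : 1 ≤ n := by
            by_contra h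
            have hn0 : n = 0 := by omega
            subst hn0
            omega
          obtain ⟨c, hc⟩ : 2 ∣ 2 ^ n := dvd_pow_self 2 (by omega)
          refine ih (i - 2 ^ n) hi'1 hi'le f ?_
          rcases hf' with ⟨_, heven, hfz⟩ | ⟨_, hodd, hfpos, hbit, hmin⟩
          · exact Or.inr (Or.inl ⟨h1, by omega, hfz⟩)
          · have hoddi' : (i - 2 ^ n) % 2 = 1 := by omega
            have hfn : f < n := by
              by_contra hfe
              have hmod : i % 2 ^ n = 1 :=
                mod_two_pow_eq_one i n (by omega) hodd
                  (fun j hj hjn => hmin j hj (by omega))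
              have hlt : i - 2 ^ n < 2 ^ n := by omega
              have hmod2 : i % 2 ^ n = i - 2 ^ n := by
                conv_lhs => rw [hieq]
                rw [Nat.add_mod_left]
                exact Nat.mod_eq_of_lt hlt
              omega
            have hbits : ∀ j, j < n → (i - 2 ^ n).testBit j = i.testBit j := by
              intro j hj
              conv_rhs => rw [hieq]
              rw [Nat.testBit_two_pow_add_gt hj]
            refine Or.inr (Or.inr ⟨h1, hoddi', hfpos, ?_, ?_⟩)
            · rw [hbits f hfn]; exact hbit
            · intro j hj hjf
              rw [hbits j (by omega)]
              exact hmin j hj hjf
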